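/- The subspace N = { Σ_i x_i ⊗ u_i ∈ L ⊗ M : Σ_i (f x_i)·u_i = 0 for all f ∈ A } is an L-submodule of the tensor product module L ⊗ M (with L acting on the first factor by the adjoint action and on the second by the module action), and the A-cover of M is isomorphic as an L-module to (L ⊗ M)/N. -/

import Mathlib

open TensorProduct

attribute [local instance 100] LieRing.ofAssociativeRing

variable {K : Type*} [Field K] {L : Type*} [LieRing L] [LieAlgebra K L]
  {A : Type*} [CommRing A] [Algebra K A] [Module A L] [SMulCommClass A K L]
  {M : Type*} [AddCommGroup M] [Module K M] [LieRingModule L M] [LieModule K L M]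

/-- The coinduced action of `L` on `Hom(A, M)`: `(x·φ)(f) = x·(φ f) - φ(x·f)`. -/
def coind (D : L →ₗ⁅K⁆ Module.End K A) (x : L) (φ : A → M) : A → M :=
  fun f => ⁅x, φ f⁆ - φ (D x f)

/-- The generators of the `A`-cover: `ψ(x,u)(f) = (f x)·u`. -/
def psi (x : L) (u : M) : A → M := fun f => ⁅f • x, u⁆

/-- The `A`-cover of `M`: the span of the `ψ(x,u)` inside `Hom(A,M)`. -/
def cover (K : Type*) [Field K] (L : Type*) [LieRing L] (A : Type*) [CommRing A]
    [Module A L] (M : Type*) [AddCommGroup M] [Module K M] [LieRingModule L M] :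
    Submodule K (A → M) :=
  Submodule.span K {φ : A → M | ∃ (x : L) (u : M), φ = psi x u}

/-- The contraction `Σ xᵢ ⊗ uᵢ ↦ Σ (f xᵢ)·uᵢ`. -/
noncomputable def ctr (f : A) : L ⊗[K] M →ₗ[K] M :=
  TensorProduct.lift (LinearMap.mk₂ K (fun x u => ⁅f • x, u⁆)
    (fun x₁ x₂ u => show ⁅f • (x₁ + x₂), u⁆ = ⁅f • x₁, u⁆ + ⁅f • x₂, u⁆ by
      rw [smul_add, add_lie])
    (fun c x u => show ⁅f • (c • x), u⁆ = c • ⁅f • x, u⁆ by rw [smul_comm, smul_lie])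
    (fun x u₁ u₂ => show ⁅f • x, u₁ + u₂⁆ = ⁅f • x, u₁⁆ + ⁅f • x, u₂⁆ by rw [lie_add])
    (fun c x u => show ⁅f • x, c • u⁆ = c • ⁅f • x, u⁆ by rw [lie_smul]))

/-- The subspace `N = {Σ xᵢ ⊗ uᵢ : Σ (f xᵢ)·uᵢ = 0 for all f}`. -/
noncomputable def Ncov : Submodule K (L ⊗[K] M) :=
  ⨅ f : A, LinearMap.ker (ctr (L := L) (M := M) f)

set_option linter.unusedSectionVars false

noncomputable def Psi : L ⊗[K] M →ₗ[K] (A → M) :=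
  LinearMap.pi (fun f => ctr f)

lemma Psi_tmul (x : L) (u : M) : Psi (x ⊗ₜ[K] u) = psi (A := A) x u := rfl

lemma Ncov_eq_ker : Ncov (K := K) (L := L) (A := A) (M := M) = LinearMap.ker (Psi (K := K) (L := L) (A := A) (M := M)) := by
  ext z
  simp [Ncov, Psi, Submodule.mem_iInf, LinearMap.mem_ker, funext_iff]

lemma range_Psi : LinearMap.range (Psi (K := K) (L := L) (A := A) (M := M))
    = cover K L A M := by
  apply le_antisymm
  · rw [LinearMap.range_eq_map, ← TensorProduct.span_tmul_eq_top K L M,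
      Submodule.map_span, Submodule.span_le]
    rintro φ ⟨z, ⟨x, u, rfl⟩, rfl⟩
    exact Submodule.subset_span ⟨x, u, rfl⟩
  · rw [cover, Submodule.span_le]
    rintro φ ⟨x, u, rfl⟩
    exact ⟨x ⊗ₜ u, rfl⟩

lemma coind_add (D : L →ₗ⁅K⁆ Module.End K A) (y : L) (φ φ' : A → M) :
    coind D y (φ + φ') = coind D y φ + coind D y φ' := by
  funext f; simp [coind]; abel

lemma Psi_lie (D : L →ₗ⁅K⁆ Module.End K A)
    (hcompat : ∀ (y : L) (f : A) (x : L), ⁅y, f • x⁆ = D y f • x + f • ⁅y, x⁆)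
    (y : L) (z : L ⊗[K] M) : Psi ⁅y, z⁆ = coind D y (Psi z) := by
  induction z using TensorProduct.induction_on with
  | zero =>
      rw [lie_zero, map_zero]
      funext f; simp [coind]
  | tmul x u =>
      have : ⁅y, x ⊗ₜ[K] u⁆ = ⁅y, x⁆ ⊗ₜ u + x ⊗ₜ ⁅y, u⁆ := rfl
      rw [this, map_add]
      funext f
      show ⁅f • ⁅y, x⁆, u⁆ + ⁅f • x, ⁅y, u⁆⁆ = ⁅y, ⁅f • x, u⁆⁆ - ⁅D y f • x, u⁆
      rw [leibniz_lie y (f • x) u, hcompat, add_lie]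
      abel
  | add z₁ z₂ h₁ h₂ => rw [lie_add, map_add, map_add, h₁, h₂, coind_add]

theorem cover_iso_tensor_quotient (D : L →ₗ⁅K⁆ Module.End K A)
    (hder : ∀ (x : L) (a b : A), D x (a * b) = a * D x b + D x a * b)
    (hcompat : ∀ (y : L) (f : A) (x : L), ⁅y, f • x⁆ = D y f • x + f • ⁅y, x⁆) :
    (∀ (y : L) (z : L ⊗[K] M), z ∈ Ncov (A := A) → ⁅y, z⁆ ∈ Ncov (A := A)) ∧
      ∃ Φ : ((L ⊗[K] M) ⧸ Ncov (A := A)) ≃ₗ[K] cover K L A M,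
        ∀ (y : L) (z : L ⊗[K] M),
          (Φ (Submodule.Quotient.mk ⁅y, z⁆) : A → M)
            = coind D y (Φ (Submodule.Quotient.mk z) : A → M) := by
  constructor
  · intro y z hz
    rw [Ncov_eq_ker, LinearMap.mem_ker] at hz ⊢
    rw [Psi_lie D hcompat, hz]
    funext f; simp [coind]
  · refine ⟨(Submodule.quotEquivOfEq _ _ Ncov_eq_ker).trans
      ((LinearMap.quotKerEquivRange (Psi (K := K) (L := L) (A := A) (M := M))).trans
        (LinearEquiv.ofEq _ _ (range_Psi (K := K) (L := L) (A := A) (M := M)))), ?_⟩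
    intro y z
    simp only [LinearEquiv.trans_apply, Submodule.quotEquivOfEq_mk,
      LinearMap.quotKerEquivRange_apply_mk, LinearEquiv.coe_ofEq_apply]
    exact Psi_lie D hcompat y z
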